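/- Let G = G(m,n,k) with trivial centre, S a base, S* the multiplicative closure of S in ℤ_m, and for x ∈ S* define Y(x) = {s*·z : s* ∈ S*, z ∈ ℤ_m, ∃ s ∈ S with x ≡ s·s* (mod m)}. Then for y ∈ ℤ_m: y ∈ Y(x) if and only if C(x,y) ⊆ Σ_G(S). -/
import Mathlib

/-- `n = ind_m(k)`: `n` is the least positive integer with `k^n ≡ 1 (mod m)`. -/
def IsIndex (m k n : ℕ) : Prop :=
  0 < n ∧ k ^ n ≡ 1 [MOD m] ∧ ∀ d : ℕ, 0 < d → k ^ d ≡ 1 [MOD m] → n ≤ d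

/-- The mu-map `μ(x,y)` of `G = G(m,n,k)`, acting on elements of `G` written in
the normal form `a^i b^j` (identified with pairs `(i,j) ∈ ℤ_m × ℤ_n`):
`(a^i b^j) μ(x,y) = a^N` with `N ≡ x·i·k^j − y·(k^j − 1) (mod m)`. -/
def Mu (m n k : ℕ) (x y : ZMod m) : Function.End (ZMod m × ZMod n) :=
  fun p => (x * p.1 * (k : ZMod m) ^ p.2.val -
    y * ((k : ZMod m) ^ p.2.val - 1), 0)

/-- The container `C(x,y) = {μ(x, yz) : z ∈ ℤ_m}`. -/
def Container (m n k : ℕ) (x y : ZMod m) :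
    Set (Function.End (ZMod m × ZMod n)) :=
  {f | ∃ z : ZMod m, f = Mu m n k x (y * z)}
/-- The multiplicative closure `S*` of `S` in `ℤ_m`. -/
def mulClosure (m : ℕ) (S : Set (ZMod m)) : Set (ZMod m) :=
  Subsemigroup.closure S

/-- `S ⊆ ℤ_m` is a base if it contains `0` and at least one unit of `ℤ_m`. -/
def IsBase (m : ℕ) (S : Set (ZMod m)) : Prop :=
  (0 : ZMod m) ∈ S ∧ ∃ u ∈ S, IsUnit u

/-- The set `Γ_μ(S) = {μ(s,z) : s ∈ S, z ∈ ℤ_m}` of mu-generators. -/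
def GammaMu (m n k : ℕ) (S : Set (ZMod m)) :
    Set (Function.End (ZMod m × ZMod n)) :=
  {f | ∃ s ∈ S, ∃ z : ZMod m, f = Mu m n k s z}

/-- The set `Π_μ(S) = {μ(s·s*, s*·z) : s ∈ S, s* ∈ S*, z ∈ ℤ_m}` of
mu-products. -/
def PiMu (m n k : ℕ) (S : Set (ZMod m)) :
    Set (Function.End (ZMod m × ZMod n)) :=
  {f | ∃ s ∈ S, ∃ t ∈ mulClosure m S, ∃ z : ZMod m,
    f = Mu m n k (s * t) (t * z)}

/-- The `G`-semigroup `Σ_G(S)`: the subsemigroup of `M(G)` (under composition)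
generated by `Γ_μ(S)`. -/
def SigmaG (m n k : ℕ) (S : Set (ZMod m)) :
    Set (Function.End (ZMod m × ZMod n)) :=
  Subsemigroup.closure (GammaMu m n k S)
/-- The set `Y(x) = {s*·z : s* ∈ S*, z ∈ ℤ_m, ∃ s ∈ S with x = s·s* (mod m)}`. -/
def Yset (m : ℕ) (S : Set (ZMod m)) (x : ZMod m) : Set (ZMod m) :=
  {w | ∃ t ∈ mulClosure m S, ∃ z : ZMod m, w = t * z ∧ ∃ s ∈ S, x = s * t}

section Aux

variable {m n k : ℕ}

lemma mu_mul (hn : 0 < n) (x y x' y' : ZMod m) :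
    Mu m n k x y * Mu m n k x' y' = Mu m n k (x * x') (x * y') := by
  haveI : NeZero n := ⟨hn.ne'⟩
  funext p
  show Mu m n k x y (Mu m n k x' y' p) = _
  simp only [Mu, ZMod.val_zero, pow_zero]
  refine Prod.ext ?_ rfl
  ring

lemma mu_zero_mem (hn : 0 < n) {S : Set (ZMod m)} {t : ZMod m}
    (ht : t ∈ Subsemigroup.closure S) :
    Mu m n k t 0 ∈ Subsemigroup.closure (GammaMu m n k S) := by
  induction ht using Subsemigroup.closure_induction with
  | mem s hs => exact Subsemigroup.subset_closure ⟨s, hs, 0, rfl⟩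
  | mul a b ha hb iha ihb =>
    have : Mu m n k (a * b) (0 : ZMod m) = Mu m n k a 0 * Mu m n k b 0 := by
      rw [mu_mul hn, mul_zero]
    rw [this]
    exact mul_mem iha ihb

lemma piMu_mem (hn : 0 < n) {S : Set (ZMod m)} {t : ZMod m}
    (ht : t ∈ Subsemigroup.closure S) :
    ∀ s ∈ S, ∀ z : ZMod m,
      Mu m n k (s * t) (t * z) ∈ Subsemigroup.closure (GammaMu m n k S) := by
  induction ht using Subsemigroup.closure_induction with
  | mem s' hs' =>
    intro s hs z
    have : Mu m n k (s * s') (s' * z) = Mu m n k s' 0 * Mu m n k s z := by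
      rw [mu_mul hn, mul_comm s s']
    rw [this]
    exact mul_mem (Subsemigroup.subset_closure ⟨s', hs', 0, rfl⟩)
      (Subsemigroup.subset_closure ⟨s, hs, z, rfl⟩)
  | mul a b ha hb iha ihb =>
    intro s hs z
    have : Mu m n k (s * (a * b)) ((a * b) * z)
        = Mu m n k a 0 * Mu m n k (s * b) (b * z) := by
      rw [mu_mul hn]; ring_nf
    rw [this]
    exact mul_mem (mu_zero_mem hn ha) (ihb s hs z)

lemma one_mem_closure (hm : 0 < m) {S : Set (ZMod m)}
    {u : ZMod m} (hu : u ∈ S) (huu : IsUnit u) :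
    (1 : ZMod m) ∈ Subsemigroup.closure S := by
  haveI : NeZero m := ⟨hm.ne'⟩
  obtain ⟨v, hv⟩ := huu
  have hpow : ∀ j : ℕ, u ^ (j + 1) ∈ Subsemigroup.closure S := by
    intro j
    induction j with
    | zero => simpa using Subsemigroup.subset_closure hu
    | succ j ih => rw [pow_succ]; exact mul_mem ih (Subsemigroup.subset_closure hu)
  have hord : 0 < orderOf v := orderOf_pos v
  have : u ^ orderOf v = 1 := by
    rw [← hv, ← Units.val_pow_eq_pow_val, pow_orderOf_eq_one, Units.val_one]
  have h1 : (1 : ZMod m) = u ^ (orderOf v - 1 + 1) := by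
    rw [Nat.sub_add_cancel hord, this]
  rw [h1]
  exact hpow _

lemma sigma_sub_pi (hn : 0 < n) {S : Set (ZMod m)}
    (h1 : (1 : ZMod m) ∈ Subsemigroup.closure S)
    {f : Function.End (ZMod m × ZMod n)}
    (hf : f ∈ Subsemigroup.closure (GammaMu m n k S)) :
    ∃ s ∈ S, ∃ t ∈ Subsemigroup.closure S, ∃ z : ZMod m,
      f = Mu m n k (s * t) (t * z) := by
  induction hf using Subsemigroup.closure_induction with
  | mem g hg =>
    obtain ⟨s, hs, z, rfl⟩ := hg
    exact ⟨s, hs, 1, h1, z, by rw [mul_one, one_mul]⟩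
  | mul a b ha hb iha ihb =>
    obtain ⟨s₁, hs₁, t₁, ht₁, z₁, rfl⟩ := iha
    obtain ⟨s₂, hs₂, t₂, ht₂, z₂, rfl⟩ := ihb
    refine ⟨s₂, hs₂, s₁ * t₁ * t₂,
      mul_mem (mul_mem (Subsemigroup.subset_closure hs₁) ht₁) ht₂, z₂, ?_⟩
    rw [mu_mul hn]; ring_nf

lemma mu_inj (hm : 1 < m) (hk : 0 < k) (hcop : Nat.gcd m (k - 1) = 1)
    (hind : IsIndex m k n) {x y x' y' : ZMod m}
    (h : Mu m n k x y = Mu m n k x' y') : x = x' ∧ y = y' := by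
  haveI : NeZero m := ⟨by omega⟩
  haveI : NeZero n := ⟨hind.1.ne'⟩
  have hn2 : 1 < n := by
    rcases Nat.lt_or_ge n 2 with h2 | h2
    · exfalso
      interval_cases n
      · exact absurd hind.1 (by simp)
      · have : k ≡ 1 [MOD m] := by simpa using hind.2.1
        have hdvd : m ∣ k - 1 := (Nat.modEq_iff_dvd' hk).mp this.symm
        have := Nat.gcd_eq_left hdvd
        omega
    · omega
  haveI : Fact (1 < n) := ⟨hn2⟩
  have hx : x = x' := by
    have h1 := congrArg (fun f => (f (1, 0)).1) h
    simpa [Mu] using h1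
  refine ⟨hx, ?_⟩
  have hunit : IsUnit ((k : ZMod m) - 1) := by
    have : ((k - 1 : ℕ) : ZMod m) = (k : ZMod m) - 1 := by
      push_cast [Nat.cast_sub hk]; ring
    rw [← this, ZMod.isUnit_iff_coprime]
    rwa [Nat.Coprime, Nat.gcd_comm]
  have h2 := congrArg (fun f => (f (0, 1)).1) h
  simp only [Mu, ZMod.val_one, pow_one, mul_zero, zero_mul, zero_sub, neg_inj] at h2
  have : ((k : ZMod m) - 1) * y = ((k : ZMod m) - 1) * y' := by
    rw [mul_comm _ y, mul_comm _ y']; exact h2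
  exact hunit.mul_left_cancel this

end Aux

/-- for `x ∈ S*` and `y ∈ ℤ_m`: `y ∈ Y(x)` iff
`C(x,y) ⊆ Σ_G(S)`. -/
theorem stmt_15 (m n k : ℕ) (hm : 0 < m) (hk : 0 < k)
    (hcop : Nat.gcd m (k - 1) = 1) (hind : IsIndex m k n)
    (S : Set (ZMod m)) (hS : IsBase m S)
    (x : ZMod m) (hx : x ∈ mulClosure m S) (y : ZMod m) :
    y ∈ Yset m S x ↔ Container m n k x y ⊆ SigmaG m n k S := by
  obtain ⟨h0, u, hu, huu⟩ := hS
  have hn : 0 < n := hind.1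
  have h1 : (1 : ZMod m) ∈ Subsemigroup.closure S := one_mem_closure hm hu huu
  constructor
  · rintro ⟨t, ht, z, rfl, s, hs, rfl⟩
    rintro f ⟨z', rfl⟩
    have : Mu m n k (s * t) (t * z * z') = Mu m n k (s * t) (t * (z * z')) := by
      rw [mul_assoc]
    rw [this]
    exact piMu_mem hn ht s hs (z * z')
  · intro h
    have hmem : Mu m n k x y ∈ Subsemigroup.closure (GammaMu m n k S) := by
      have := h ⟨1, by rw [mul_one]⟩
      exact this
    obtain ⟨s, hs, t, ht, z, heq⟩ := sigma_sub_pi hn h1 hmem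
    rcases Nat.lt_or_ge m 2 with hm1 | hm2
    · have hm1 : m = 1 := by omega
      subst hm1
      exact ⟨1, h1, y, Subsingleton.elim _ _, u, hu, Subsingleton.elim _ _⟩
    · obtain ⟨hx', hy'⟩ := mu_inj hm2 hk hcop hind heq
      exact ⟨t, ht, z, hy', s, hs, hx'⟩
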